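/- arXiv:1404.3067 — 3 statements merged into one kernel-verified Lean document; each statement's English description precedes it below -/
import Mathlib

section
/- Let f : A → B and g : B → C be central extensions of groups, with B perfect. Then the composite g ∘ f : A → C is a central extension; i.e. ker(g ∘ f) ≤ Z(A). -/
open scoped commutatorElement

theorem stmt4 {A B C : Type*} [Group A] [Group B] [Group C]
    (f : A →* B) (g : B →* C)
    (hf : Function.Surjective f) (hfker : f.ker ≤ Subgroup.center A)
    (hg : Function.Surjective g) (hgker : g.ker ≤ Subgroup.center B)
    (hB : commutator B = ⊤) :
    (g.comp f).ker ≤ Subgroup.center A := by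
  intro a ha
  -- f a is central in B
  have hfa : f a ∈ Subgroup.center B := hgker (by simpa [MonoidHom.mem_ker] using ha)
  rw [Subgroup.mem_center_iff] at hfa
  -- every commutator ⁅a, x⁆ lies in center A
  have hc : ∀ x : A, ⁅a, x⁆ ∈ Subgroup.center A := by
    intro x
    apply hfker
    rw [MonoidHom.mem_ker, map_commutatorElement, commutatorElement_eq_one_iff_mul_comm]
    exact (hfa (f x)).symm
  -- ψ : A →* A, x ↦ ⁅a, x⁆, a hom since values are central
  have hcomm : ∀ (z : A) (x : A), z ∈ Subgroup.center A → z * x = x * z := by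
    intro z x hz
    exact (Subgroup.mem_center_iff.mp hz x).symm
  have hmul : ∀ x y : A, ⁅a, x * y⁆ = ⁅a, x⁆ * ⁅a, y⁆ := by
    intro x y
    have h1 : ⁅a, x * y⁆ = ⁅a, x⁆ * (x * ⁅a, y⁆ * x⁻¹) := by
      simp only [commutatorElement_def]; group
    have h2 : x * ⁅a, y⁆ = ⁅a, y⁆ * x := (hcomm _ x (hc y)).symm
    rw [h1, h2]; group
  let ψ : A →* A := { toFun := fun x => ⁅a, x⁆,
                      map_one' := by simp,
                      map_mul' := hmul }
  -- ψ kills ker f, so it factors through B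
  have hker : ∀ k : A, k ∈ f.ker → ψ k = 1 := by
    intro k hk
    show ⁅a, k⁆ = 1
    rw [commutatorElement_eq_one_iff_mul_comm]
    exact (Subgroup.mem_center_iff.mp (hfker hk) a)
  obtain ⟨s, hs⟩ := hf.hasRightInverse
  let φ : B →* A := { toFun := fun b => ψ (s b),
                      map_one' := by
                        have : s 1 ∈ f.ker := by rw [MonoidHom.mem_ker, hs 1]
                        exact hker _ this,
                      map_mul' := by
                        intro b1 b2
                        have : s (b1 * b2) * (s b1 * s b2)⁻¹ ∈ f.ker := by
                          rw [MonoidHom.mem_ker]; simp [hs b1, hs b2, hs (b1*b2), mul_assoc]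
                        have h2 := hker _ this
                        rw [map_mul, map_inv, map_mul] at h2
                        have := mul_eq_one_iff_eq_inv.mp h2
                        simpa using this }
  -- φ x is always central, so φ kills commutators, so φ = 1 since B perfect
  have hφc : ∀ b : B, φ b ∈ Subgroup.center A := fun b => hc (s b)
  have hφ1 : ∀ b : B, φ b = 1 := by
    intro b
    have hb : b ∈ commutator B := by rw [hB]; trivial
    rw [commutator_eq_closure] at hb
    induction hb using Subgroup.closure_induction with
    | mem z hz =>
      obtain ⟨p, q, rfl⟩ := hz
      rw [map_commutatorElement, commutatorElement_eq_one_iff_mul_comm]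
      exact (Subgroup.mem_center_iff.mp (hφc p) (φ q)).symm
    | one => exact map_one φ
    | mul p q _ _ hp hq => rw [map_mul, hp, hq, mul_one]
    | inv p _ hp => rw [map_inv, hp, inv_one]
  -- conclude: ⁅a, x⁆ = 1 for all x
  rw [Subgroup.mem_center_iff]
  intro x
  have : ψ x = 1 := by
    have h1 : x * (s (f x))⁻¹ ∈ f.ker := by rw [MonoidHom.mem_ker]; simp [hs (f x)]
    have h2 := hker _ h1
    rw [map_mul, map_inv] at h2
    have h3 : ψ x = ψ (s (f x)) := by
      have := mul_inv_eq_one.mp h2; exact this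
    rw [h3]; exact hφ1 (f x)
  have : ⁅a, x⁆ = 1 := this
  rw [commutatorElement_eq_one_iff_mul_comm] at this
  exact this.symm
end

section
/- (Grün's Lemma) If P is a perfect group, then the quotient P/Z(P) has trivial center. -/
open scoped commutatorElement IsMulCommutative

theorem stmt5 {P : Type*} [Group P] (hP : commutator P = ⊤) :
    Subgroup.center (P ⧸ Subgroup.center P) = ⊥ := by
  rw [eq_bot_iff]
  intro q hq
  obtain ⟨g, rfl⟩ := QuotientGroup.mk_surjective q
  -- every commutator ⁅g, x⁆ is central
  have hcomm : ∀ x : P, ⁅g, x⁆ ∈ Subgroup.center P := by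
    intro x
    have h0 := Subgroup.mem_center_iff.mp hq (QuotientGroup.mk x)
    rw [← QuotientGroup.mk_mul, ← QuotientGroup.mk_mul, QuotientGroup.eq] at h0
    have h2 : ⁅g, x⁆ = (g * x) * ((x * g)⁻¹ * (g * x)) * (g * x)⁻¹ := by
      group
    rw [h2]
    exact Subgroup.Normal.conj_mem inferInstance _ h0 _
  -- the map x ↦ ⁅g, x⁆ is a homomorphism into the center
  let φ : P →* Subgroup.center P :=
    { toFun := fun x => ⟨⁅g, x⁆, hcomm x⟩
      map_one' := by ext; simp
      map_mul' := by
        intro x y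
        ext
        have h := Subgroup.mem_center_iff.mp (hcomm y) x⁻¹
        show ⁅g, x * y⁆ = ⁅g, x⁆ * ⁅g, y⁆
        calc ⁅g, x * y⁆ = ⁅g, x⁆ * x * (⁅g, y⁆ * x⁻¹) := by group
          _ = ⁅g, x⁆ * x * (x⁻¹ * ⁅g, y⁆) := by rw [← h]
          _ = ⁅g, x⁆ * ⁅g, y⁆ := by group }
  have hker : ∀ x : P, φ x = 1 := fun x =>
    MonoidHom.mem_ker.mp ((hP ▸ Abelianization.commutator_subset_ker φ) (Subgroup.mem_top x))
  have hg : g ∈ Subgroup.center P := by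
    rw [Subgroup.mem_center_iff]
    intro x
    have h1 : ⁅g, x⁆ = 1 := congrArg Subtype.val (hker x)
    exact (commutatorElement_eq_one_iff_mul_comm.mp h1).symm
  simpa [QuotientGroup.eq_one_iff] using hg
end

section
/- Let f : A → B and g : B → C be central extensions of groups with B perfect, and let K = ker(g ∘ f). Then ⁅A, K⁆ = ⁅[A,A], K⁆ as subgroups of A. -/
open scoped commutatorElement in
theorem stmt10 {A B C : Type*} [Group A] [Group B] [Group C]
    (f : A →* B) (g : B →* C)
    (hf : Function.Surjective f) (hfker : f.ker ≤ Subgroup.center A)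
    (hg : Function.Surjective g) (hgker : g.ker ≤ Subgroup.center B)
    (hB : commutator B = ⊤) :
    ⁅(⊤ : Subgroup A), (g.comp f).ker⁆ = ⁅commutator A, (g.comp f).ker⁆ := by
  refine le_antisymm ?_ (Subgroup.commutator_mono le_top le_rfl)
  have hmap : (commutator A).map f = ⊤ := by
    rw [commutator, Subgroup.map_commutator,
      Subgroup.map_top_of_surjective f hf, ← commutator, hB]
  rw [Subgroup.commutator_le]
  intro a _ k hk
  obtain ⟨c, hc, hfc⟩ : ∃ c ∈ commutator A, f c = f a := by
    have : f a ∈ (commutator A).map f := by rw [hmap]; trivial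
    simpa using this
  have hzker : c⁻¹ * a ∈ f.ker := by
    simp [MonoidHom.mem_ker, hfc]
  have hz : ∀ g : A, g * (c⁻¹ * a) = (c⁻¹ * a) * g :=
    Subgroup.mem_center_iff.mp (hfker hzker)
  have key : ⁅a, k⁆ = ⁅c, k⁆ := by
    have h1 : a = c * (c⁻¹ * a) := by group
    rw [h1, commutatorElement_def, commutatorElement_def, mul_inv_rev,
      show c * (c⁻¹ * a) * k = c * k * (c⁻¹ * a) by rw [mul_assoc, ← hz k, ← mul_assoc]]
    group
  rw [key]
  exact Subgroup.commutator_mem_commutator hc hk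
end
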